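/- arXiv:2109.08239 — 3 statements merged into one kernel-verified Lean document; each statement's English description precedes it below -/
import Mathlib

section
/- Let f : Ω → ℝ, λ : Ω → (0,∞), and w : Ω → (0,∞) all be continuous, and assume E(x,y) ⊆ Ω for all (x,y) ∈ Ω. Fix an integer N ≥ 1 and a real p with 1 ≤ p < ∞. Then the persistence-surface map is continuous with respect to W_p: for every D ∈ Ω^N and every ε > 0 there exists δ > 0 such that for every D' ∈ Ω^N with W_p(D,D') < δ one has ‖f̃ρ(D) − f̃ρ(D')‖_{L²(w dA)} < ε. -/
open MeasureTheory Real

noncomputable section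

/-- The open first quadrant. -/
def Omega : Set (ℝ × ℝ) := {p | 0 < p.1 ∧ 0 < p.2}

/-- The closed axis-aligned square centered at `p` with side length `l`. -/
def sqr (l : ℝ) (p : ℝ × ℝ) : Set (ℝ × ℝ) :=
  Set.Icc (p.1 - l / 2) (p.1 + l / 2) ×ˢ Set.Icc (p.2 - l / 2) (p.2 + l / 2)

/-- The square `E(p)` associated to a length function `lam`. -/
def sqE (lam : ℝ × ℝ → ℝ) (p : ℝ × ℝ) : Set (ℝ × ℝ) := sqr (lam p) p

/-- The persistence surface of the diagram `D`. -/
def surf (f lam : ℝ × ℝ → ℝ) {N : ℕ} (D : Fin N → ℝ × ℝ) (z : ℝ × ℝ) : ℝ :=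
  ∑ n, f (D n) * Set.indicator (sqE lam (D n)) 1 z

/-- The identification `ρ(D)` of a persistence diagram as a function. -/
def rho (lam : ℝ × ℝ → ℝ) {N : ℕ} (D : Fin N → ℝ × ℝ) (z : ℝ × ℝ) : ℝ :=
  ∑ n, Set.indicator (sqE lam (D n)) 1 z

/-- The `L²(w dA)` norm, the integral taken over `Omega`. -/
def l2norm (w g : ℝ × ℝ → ℝ) : ℝ :=
  Real.sqrt (∫ z in Omega, (g z) ^ 2 * w z)

/-- The `p`-Wasserstein distance between two `N`-point diagrams (sup-norm ground metric). -/
def Wp (p : ℝ) {N : ℕ} (D D' : Fin N → ℝ × ℝ) : ℝ :=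
  ⨅ σ : Equiv.Perm (Fin N), (∑ n, ‖D n - D' (σ n)‖ ^ p) ^ (1 / p)

/-- The `1/2`-Wasserstein distance (no outer power). -/
def Whalf {N : ℕ} (D D' : Fin N → ℝ × ℝ) : ℝ :=
  ⨅ σ : Equiv.Perm (Fin N), ∑ n, ‖D n - D' (σ n)‖ ^ ((1 : ℝ) / 2)

/-- The `1`-Wasserstein distance. -/
def W1 {N : ℕ} (D D' : Fin N → ℝ × ℝ) : ℝ :=
  ⨅ σ : Equiv.Perm (Fin N), ∑ n, ‖D n - D' (σ n)‖

/-- The persistence image value `I_S(D) = ∫_S f̃ρ(D) w dA`. -/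
def Ipix (f lam w : ℝ × ℝ → ℝ) {N : ℕ} (D : Fin N → ℝ × ℝ) (S : Set (ℝ × ℝ)) : ℝ :=
  ∫ z in S, surf f lam D z * w z

/-- `‖f‖_∞ = sup_Ω |f|`. -/
def supAbs (f : ℝ × ℝ → ℝ) : ℝ := ⨆ p : Omega, |f p.val|

/-- `‖λ‖_∞ = sup_Ω λ`. -/
def supLam (lam : ℝ × ℝ → ℝ) : ℝ := ⨆ p : Omega, lam p.val

lemma isOpen_Omega' : IsOpen Omega :=
  (isOpen_lt continuous_const continuous_fst).inter (isOpen_lt continuous_const continuous_snd)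

lemma mem_sqr' {l : ℝ} {p z : ℝ × ℝ} :
    z ∈ sqr l p ↔ (p.1 - l/2 ≤ z.1 ∧ z.1 ≤ p.1 + l/2) ∧ (p.2 - l/2 ≤ z.2 ∧ z.2 ≤ p.2 + l/2) := by
  exact Iff.rfl

lemma sqr_mono' {l l' : ℝ} (h : l ≤ l') (p : ℝ × ℝ) : sqr l p ⊆ sqr l' p := by
  intro z hz
  rw [mem_sqr'] at hz ⊢
  obtain ⟨⟨a1, a2⟩, b1, b2⟩ := hz
  exact ⟨⟨by linarith, by linarith⟩, by linarith, by linarith⟩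

lemma sqr_subset_outer' {q q' : ℝ × ℝ} {l l' u : ℝ}
    (h1 : |q'.1 - q.1| ≤ u/4) (h2 : |q'.2 - q.2| ≤ u/4) (hl : |l' - l| ≤ u/2) :
    sqr l' q' ⊆ sqr (l + u) q := by
  rw [abs_le] at h1 h2 hl
  intro z hz
  rw [mem_sqr'] at hz ⊢
  obtain ⟨⟨a1, a2⟩, b1, b2⟩ := hz
  exact ⟨⟨by linarith, by linarith⟩, by linarith, by linarith⟩

lemma inner_subset_sqr' {q q' : ℝ × ℝ} {l l' u : ℝ}
    (h1 : |q'.1 - q.1| ≤ u/4) (h2 : |q'.2 - q.2| ≤ u/4) (hl : |l' - l| ≤ u/2) :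
    sqr (l - u) q ⊆ sqr l' q' := by
  rw [abs_le] at h1 h2 hl
  intro z hz
  rw [mem_sqr'] at hz ⊢
  obtain ⟨⟨a1, a2⟩, b1, b2⟩ := hz
  exact ⟨⟨by linarith, by linarith⟩, by linarith, by linarith⟩

lemma measurableSet_sqr' {l : ℝ} {p : ℝ × ℝ} : MeasurableSet (sqr l p) :=
  measurableSet_Icc.prod measurableSet_Icc

lemma volume_sqr' (l : ℝ) (p : ℝ × ℝ) :
    volume (sqr l p) = ENNReal.ofReal l * ENNReal.ofReal l := by
  rw [sqr, Measure.volume_eq_prod ℝ ℝ, Measure.prod_prod, Real.volume_Icc, Real.volume_Icc]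
  congr 1 <;> · congr 1; ring

lemma integrable_cmi' {s : Set (ℝ × ℝ)} (hs : MeasurableSet s) (hfin : volume s ≠ ⊤)
    (aa : ℝ) (t : Set (ℝ × ℝ)) :
    Integrable (fun z => aa * Set.indicator s 1 z) (volume.restrict t) := by
  have heq : (fun z => aa * Set.indicator s (1 : (ℝ × ℝ) → ℝ) z)
      = Set.indicator s (fun _ => aa) := by
    funext z; by_cases hz : z ∈ s <;> simp [hz]
  rw [heq, integrable_indicator_iff hs]
  exact integrableOn_const (lt_of_le_of_lt (Measure.restrict_apply_le _ _) hfin.lt_top).ne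

lemma integral_cmi_le' {s : Set (ℝ × ℝ)} (hs : MeasurableSet s) (hfin : volume s ≠ ⊤)
    {aa : ℝ} (ha : 0 ≤ aa) (t : Set (ℝ × ℝ)) :
    ∫ z in t, aa * Set.indicator s 1 z ≤ aa * (volume s).toReal := by
  have heq : (fun z => aa * Set.indicator s (1 : (ℝ × ℝ) → ℝ) z)
      = Set.indicator s (fun _ => aa) := by
    funext z; by_cases hz : z ∈ s <;> simp [hz]
  rw [show (fun z => aa * Set.indicator s (1 : (ℝ × ℝ) → ℝ) z) = Set.indicator s (fun _ => aa) from heq,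
    MeasureTheory.integral_indicator hs, setIntegral_const, smul_eq_mul, mul_comm]
  have hle : ((volume.restrict t) s).toReal ≤ (volume s).toReal :=
    ENNReal.toReal_mono hfin (Measure.restrict_apply_le _ _)
  exact mul_le_mul_of_nonneg_left hle ha


set_option maxHeartbeats 1000000 in
/-- continuity of the persistence-surface map with respect to `W_p`. -/
theorem stmt4 (f lam w : ℝ × ℝ → ℝ)
    (hfc : ContinuousOn f Omega) (hlamc : ContinuousOn lam Omega)
    (hwc : ContinuousOn w Omega)
    (hlam0 : ∀ q ∈ Omega, 0 < lam q) (hw0 : ∀ q ∈ Omega, 0 < w q)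
    (hE : ∀ q ∈ Omega, sqE lam q ⊆ Omega)
    (N : ℕ) (hN : 1 ≤ N) (p : ℝ) (hp : 1 ≤ p)
    (D : Fin N → ℝ × ℝ) (hD : ∀ n, D n ∈ Omega) :
    ∀ ε > 0, ∃ δ > 0, ∀ D' : Fin N → ℝ × ℝ, (∀ n, D' n ∈ Omega) →
      Wp p D D' < δ →
      l2norm w (fun z => surf f lam D z - surf f lam D' z) < ε := by

  intro ε hε
  haveI hNE : Nonempty (Fin N) := ⟨⟨0, hN⟩⟩
  have hNpos : (0:ℝ) < (N:ℝ) := by exact_mod_cast hN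
  have hΩm : MeasurableSet Omega := isOpen_Omega'.measurableSet
  have hl : ∀ n, 0 < lam (D n) := fun n => hlam0 _ (hD n)
  -- small margin c so that the enlarged square stays in Omega
  have hcex : ∀ n, ∃ cn, 0 < cn ∧ sqr (lam (D n) + cn) (D n) ⊆ Omega := by
    intro n
    have hmem : ((D n).1 - lam (D n) / 2, (D n).2 - lam (D n) / 2) ∈ sqE lam (D n) := by
      rw [sqE, mem_sqr']
      constructor <;> constructor <;> simp <;> linarith [(hl n).le]
    have hcorner := hE (D n) (hD n) hmem
    obtain ⟨h1, h2⟩ := hcorner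
    simp only at h1 h2
    refine ⟨min ((D n).1 - lam (D n) / 2) ((D n).2 - lam (D n) / 2), lt_min h1 h2, ?_⟩
    intro z hz
    rw [mem_sqr'] at hz
    obtain ⟨⟨a1, a2⟩, b1, b2⟩ := hz
    have hm1 : min ((D n).1 - lam (D n) / 2) ((D n).2 - lam (D n) / 2) ≤ (D n).1 - lam (D n) / 2 :=
      min_le_left _ _
    have hm2 : min ((D n).1 - lam (D n) / 2) ((D n).2 - lam (D n) / 2) ≤ (D n).2 - lam (D n) / 2 :=
      min_le_right _ _
    have hm0 : 0 < min ((D n).1 - lam (D n) / 2) ((D n).2 - lam (D n) / 2) := lt_min h1 h2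
    exact ⟨by linarith, by linarith⟩
  choose c hc hcΩ using hcex
  -- bound for w on the enlarged square
  have hMex : ∀ n, ∃ Mn, 1 ≤ Mn ∧ ∀ z ∈ sqr (lam (D n) + c n) (D n), w z ≤ Mn := by
    intro n
    obtain ⟨C, hC⟩ := (isCompact_Icc.prod isCompact_Icc :
        IsCompact (sqr (lam (D n) + c n) (D n))).exists_bound_of_continuousOn
        (hwc.mono (hcΩ n))
    refine ⟨max C 1, le_max_right _ _, fun z hz => ?_⟩
    have := hC z hz
    rw [Real.norm_eq_abs] at this
    have := le_abs_self (w z)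
    calc w z ≤ |w z| := le_abs_self _
      _ ≤ C := by rw [← Real.norm_eq_abs]; exact hC z hz
      _ ≤ max C 1 := le_max_left _ _
  choose M hM1 hMw using hMex
  have hM0 : ∀ n, 0 < M n := fun n => lt_of_lt_of_le one_pos (hM1 n)
  -- choice of ε₁
  have hε₁ex : ∀ n, ∃ e, 0 < e ∧ e ≤ 1 ∧
      (N:ℝ) * e^2 * M n * (lam (D n))^2 ≤ ε^2 / (4*(N:ℝ)) := by
    intro n
    set X : ℝ := 4*(N:ℝ)^2 * M n * (lam (D n))^2 + 1 with hX
    have hXpos : 0 < X := by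
      have h0 : 0 ≤ 4*(N:ℝ)^2 * M n * (lam (D n))^2 :=
        mul_nonneg (mul_nonneg (by positivity) (hM0 n).le) (sq_nonneg _)
      rw [hX]; linarith
    refine ⟨min 1 (ε^2 / X), lt_min one_pos (div_pos (pow_pos hε 2) hXpos), min_le_left _ _, ?_⟩
    set e : ℝ := min 1 (ε^2 / X) with he
    have he0 : 0 < e := lt_min one_pos (div_pos (pow_pos hε 2) hXpos)
    have he1 : e ≤ 1 := min_le_left _ _
    have h1 : e ≤ ε^2 / X := min_le_right _ _
    have h1' : e * X ≤ ε^2 := by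
      rw [← le_div_iff₀ hXpos]; exact h1
    rw [le_div_iff₀ (by positivity : (0:ℝ) < 4*(N:ℝ))]
    have he2 : e^2 ≤ e := by nlinarith
    have hkey : (4*(N:ℝ)^2 * M n * (lam (D n))^2) * e^2 ≤ (4*(N:ℝ)^2 * M n * (lam (D n))^2) * e :=
      mul_le_mul_of_nonneg_left he2
        (mul_nonneg (mul_nonneg (by positivity) (hM0 n).le) (sq_nonneg _))
    nlinarith [he0.le]
  choose ε₁ hε₁pos hε₁le1 hbound1 using hε₁ex
  -- choice of u
  have huex : ∀ n, ∃ uu, 0 < uu ∧ uu ≤ lam (D n) ∧ uu ≤ c n ∧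
      (N:ℝ) * (|f (D n)| + 1)^2 * M n * (4 * lam (D n) * uu) ≤ ε^2 / (4*(N:ℝ)) := by
    intro n
    set Y : ℝ := 16*(N:ℝ)^2 * (|f (D n)| + 1)^2 * M n * lam (D n) + 1 with hY
    have hYpos : 0 < Y := by
      have h0 : 0 ≤ 16*(N:ℝ)^2 * (|f (D n)| + 1)^2 * M n * lam (D n) :=
        mul_nonneg (mul_nonneg (mul_nonneg (by positivity) (sq_nonneg _)) (hM0 n).le) (hl n).le
      rw [hY]; linarith
    refine ⟨min (min (lam (D n)) (c n)) (ε^2 / Y),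
      lt_min (lt_min (hl n) (hc n)) (div_pos (pow_pos hε 2) hYpos),
      le_trans (min_le_left _ _) (min_le_left _ _),
      le_trans (min_le_left _ _) (min_le_right _ _), ?_⟩
    set uu : ℝ := min (min (lam (D n)) (c n)) (ε^2 / Y) with hu
    have hu0 : 0 < uu := lt_min (lt_min (hl n) (hc n)) (div_pos (pow_pos hε 2) hYpos)
    have h1 : uu ≤ ε^2 / Y := min_le_right _ _
    have h1' : uu * Y ≤ ε^2 := by rw [← le_div_iff₀ hYpos]; exact h1
    rw [le_div_iff₀ (by positivity : (0:ℝ) < 4*(N:ℝ))]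
    nlinarith [hu0.le]
  choose u hu0 hul huc hbound2 using huex
  -- choice of t (continuity radii)
  have htex : ∀ n, ∃ tn, 0 < tn ∧ ∀ q', q' ∈ Omega → dist q' (D n) < tn →
      |f q' - f (D n)| ≤ ε₁ n ∧ |lam q' - lam (D n)| ≤ u n / 2 ∧ dist q' (D n) ≤ u n / 4 := by
    intro n
    obtain ⟨t1, ht1, hf1⟩ := Metric.continuousWithinAt_iff.1 (hfc (D n) (hD n)) (ε₁ n) (hε₁pos n)
    obtain ⟨t2, ht2, hl2⟩ := Metric.continuousWithinAt_iff.1 (hlamc (D n) (hD n)) (u n / 2)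
      (half_pos (hu0 n))
    refine ⟨min (min t1 t2) (u n / 4), lt_min (lt_min ht1 ht2) (by linarith [hu0 n]),
      fun q' hq' hd => ⟨?_, ?_, ?_⟩⟩
    · have := hf1 hq' (lt_of_lt_of_le hd (le_trans (min_le_left _ _) (min_le_left _ _)))
      rw [Real.dist_eq] at this; exact this.le
    · have := hl2 hq' (lt_of_lt_of_le hd (le_trans (min_le_left _ _) (min_le_right _ _)))
      rw [Real.dist_eq] at this; exact this.le
    · exact le_trans hd.le (min_le_right _ _)
  choose t ht0 htP using htex
  refine ⟨Finset.univ.inf' Finset.univ_nonempty t, ?_, ?_⟩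
  · exact (Finset.lt_inf'_iff _).2 fun n _ => ht0 n
  intro D' hD'Ω hWp
  set dlt := Finset.univ.inf' Finset.univ_nonempty t with hdlt
  have hdlt0 : 0 < dlt := (Finset.lt_inf'_iff _).2 fun n _ => ht0 n
  have hp0 : 0 < p := lt_of_lt_of_le one_pos hp
  -- extract a good permutation
  obtain ⟨σ, hσ⟩ := exists_lt_of_ciInf_lt
    (show ⨅ σ : Equiv.Perm (Fin N), (∑ n, ‖D n - D' (σ n)‖ ^ p) ^ (1/p) < dlt from hWp)
  have hclose : ∀ n, dist (D' (σ n)) (D n) < t n := by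
    intro n
    by_contra hcon
    push_neg at hcon
    have hdd : dlt ≤ dist (D' (σ n)) (D n) :=
      le_trans (Finset.inf'_le t (Finset.mem_univ n)) hcon
    have hne : dist (D' (σ n)) (D n) = ‖D n - D' (σ n)‖ := by
      rw [dist_eq_norm, norm_sub_rev]
    rw [hne] at hdd
    have h1 : dlt ^ p ≤ ‖D n - D' (σ n)‖ ^ p := Real.rpow_le_rpow hdlt0.le hdd hp0.le
    have h2 : ‖D n - D' (σ n)‖ ^ p ≤ ∑ m, ‖D m - D' (σ m)‖ ^ p :=
      Finset.single_le_sum (f := fun m => ‖D m - D' (σ m)‖ ^ p)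
        (fun m _ => Real.rpow_nonneg (norm_nonneg _) p) (Finset.mem_univ n)
    have h3 : dlt ≤ (∑ m, ‖D m - D' (σ m)‖ ^ p) ^ (1/p) := by
      have := Real.rpow_le_rpow (Real.rpow_nonneg hdlt0.le p) (le_trans h1 h2)
        (by positivity : (0:ℝ) ≤ 1/p)
      rwa [one_div, Real.rpow_rpow_inv hdlt0.le hp0.ne', ← one_div] at this
    exact absurd hσ (not_lt.2 h3)
  -- rename the permuted diagram
  set D2 : Fin N → ℝ × ℝ := fun n => D' (σ n) with hD2
  have hD2Ω : ∀ n, D2 n ∈ Omega := fun n => hD'Ω (σ n)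
  have hprops : ∀ n, |f (D2 n) - f (D n)| ≤ ε₁ n ∧ |lam (D2 n) - lam (D n)| ≤ u n / 2 ∧
      dist (D2 n) (D n) ≤ u n / 4 := fun n => htP n (D2 n) (hD2Ω n) (hclose n)
  have hcoord1 : ∀ n, |(D2 n).1 - (D n).1| ≤ u n / 4 := by
    intro n
    calc |(D2 n).1 - (D n).1| = dist (D2 n).1 (D n).1 := (Real.dist_eq _ _).symm
      _ ≤ dist (D2 n) (D n) := by rw [Prod.dist_eq]; exact le_max_left _ _
      _ ≤ u n / 4 := (hprops n).2.2
  have hcoord2 : ∀ n, |(D2 n).2 - (D n).2| ≤ u n / 4 := by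
    intro n
    calc |(D2 n).2 - (D n).2| = dist (D2 n).2 (D n).2 := (Real.dist_eq _ _).symm
      _ ≤ dist (D2 n) (D n) := by rw [Prod.dist_eq]; exact le_max_right _ _
      _ ≤ u n / 4 := (hprops n).2.2
  have hlamcl : ∀ n, |lam (D2 n) - lam (D n)| ≤ u n / 2 := fun n => (hprops n).2.1
  -- containments
  have hsubO : ∀ n, sqE lam (D2 n) ⊆ sqr (lam (D n) + u n) (D n) := by
    intro n
    have : sqE lam (D2 n) = sqr (lam (D2 n)) (D2 n) := rfl
    rw [this]
    exact sqr_subset_outer' (hcoord1 n) (hcoord2 n) (hlamcl n)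
  have hsubI : ∀ n, sqr (lam (D n) - u n) (D n) ⊆ sqE lam (D2 n) := by
    intro n
    have : sqE lam (D2 n) = sqr (lam (D2 n)) (D2 n) := rfl
    rw [this]
    exact inner_subset_sqr' (hcoord1 n) (hcoord2 n) (hlamcl n)
  have hSO : ∀ n, sqE lam (D n) ⊆ sqr (lam (D n) + u n) (D n) := fun n =>
    sqr_mono' (by linarith [hu0 n]) (D n)
  have hIS : ∀ n, sqr (lam (D n) - u n) (D n) ⊆ sqE lam (D n) := fun n =>
    sqr_mono' (by linarith [hu0 n]) (D n)
  have hOOut : ∀ n, sqr (lam (D n) + u n) (D n) ⊆ sqr (lam (D n) + c n) (D n) := fun n =>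
    sqr_mono' (by linarith [huc n]) (D n)
  have hSOut : ∀ n, sqE lam (D n) ⊆ sqr (lam (D n) + c n) (D n) := fun n =>
    sqr_mono' (by linarith [hc n]) (D n)
  -- the pointwise bound, per index
  have hpoint : ∀ n, ∀ z ∈ Omega,
      (N:ℝ) * (f (D n) * Set.indicator (sqE lam (D n)) 1 z
        - f (D2 n) * Set.indicator (sqE lam (D2 n)) 1 z)^2 * w z ≤
      (N:ℝ) * ε₁ n^2 * M n * Set.indicator (sqE lam (D n)) 1 z
        + (N:ℝ) * (|f (D n)| + 1)^2 * M n *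
          Set.indicator (sqr (lam (D n) + u n) (D n) \ sqr (lam (D n) - u n) (D n)) 1 z := by
    intro n z hz
    have hw0z : 0 ≤ w z := (hw0 z hz).le
    have hA0 : (0:ℝ) ≤ Set.indicator
        (sqr (lam (D n) + u n) (D n) \ sqr (lam (D n) - u n) (D n)) 1 z :=
      Set.indicator_nonneg (fun _ _ => zero_le_one) z
    have hS0 : (0:ℝ) ≤ Set.indicator (sqE lam (D n)) 1 z :=
      Set.indicator_nonneg (fun _ _ => zero_le_one) z
    have hfd : |f (D2 n) - f (D n)| ≤ ε₁ n := (hprops n).1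
    have habs := abs_le.1 hfd
    by_cases hzS : z ∈ sqE lam (D n) <;> by_cases hzE : z ∈ sqE lam (D2 n)
    · have hwM : w z ≤ M n := hMw n z (hSOut n hzS)
      simp only [Set.indicator_of_mem hzS, Set.indicator_of_mem hzE, Pi.one_apply, mul_one]
      have h2 : (f (D n) - f (D2 n))^2 ≤ ε₁ n ^2 := by nlinarith [habs.1, habs.2]
      have hkey : (f (D n) - f (D2 n))^2 * w z ≤ ε₁ n^2 * M n :=
        mul_le_mul h2 hwM hw0z (by positivity)
      have hkey2 : (N:ℝ) * ((f (D n) - f (D2 n))^2 * w z) ≤ (N:ℝ) * (ε₁ n^2 * M n) :=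
        mul_le_mul_of_nonneg_left hkey hNpos.le
      nlinarith [hkey2, mul_nonneg (mul_nonneg (mul_nonneg hNpos.le (sq_nonneg (|f (D n)| + 1)))
        (hM0 n).le) hA0]
    · have hzA : z ∈ sqr (lam (D n) + u n) (D n) \ sqr (lam (D n) - u n) (D n) :=
        ⟨hSO n hzS, fun hzI => hzE (hsubI n hzI)⟩
      have hwM : w z ≤ M n := hMw n z (hSOut n hzS)
      simp only [Set.indicator_of_mem hzS, Set.indicator_of_mem hzA,
        Set.indicator_of_notMem hzE, Pi.one_apply, mul_one, mul_zero, sub_zero]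
      have h2 : (f (D n))^2 ≤ (|f (D n)| + 1)^2 := by
        nlinarith [le_abs_self (f (D n)), neg_abs_le (f (D n)), abs_nonneg (f (D n))]
      have hkey : (f (D n))^2 * w z ≤ (|f (D n)| + 1)^2 * M n :=
        mul_le_mul h2 hwM hw0z (by positivity)
      have hkey2 : (N:ℝ) * ((f (D n))^2 * w z) ≤ (N:ℝ) * ((|f (D n)| + 1)^2 * M n) :=
        mul_le_mul_of_nonneg_left hkey hNpos.le
      nlinarith [hkey2, mul_nonneg (mul_nonneg (mul_nonneg hNpos.le (sq_nonneg (ε₁ n)))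
        (hM0 n).le) hS0, mul_nonneg (mul_nonneg hNpos.le (sq_nonneg (ε₁ n))) (hM0 n).le]
    · have hzA : z ∈ sqr (lam (D n) + u n) (D n) \ sqr (lam (D n) - u n) (D n) :=
        ⟨hsubO n hzE, fun hzI => hzS (hIS n hzI)⟩
      have hwM : w z ≤ M n := hMw n z (hOOut n (hsubO n hzE))
      simp only [Set.indicator_of_mem hzE, Set.indicator_of_mem hzA,
        Set.indicator_of_notMem hzS, Pi.one_apply, mul_one, mul_zero, zero_sub]
      have h2 : (f (D2 n))^2 ≤ (|f (D n)| + 1)^2 := by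
        nlinarith [le_abs_self (f (D n)), neg_abs_le (f (D n)), abs_nonneg (f (D n)),
          habs.1, habs.2, hε₁le1 n, hε₁pos n]
      have hkey : (f (D2 n))^2 * w z ≤ (|f (D n)| + 1)^2 * M n :=
        mul_le_mul h2 hwM hw0z (by positivity)
      have hkey2 : (N:ℝ) * ((f (D2 n))^2 * w z) ≤ (N:ℝ) * ((|f (D n)| + 1)^2 * M n) :=
        mul_le_mul_of_nonneg_left hkey hNpos.le
      nlinarith [hkey2, mul_nonneg (mul_nonneg (mul_nonneg hNpos.le (sq_nonneg (ε₁ n)))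
        (hM0 n).le) hS0, mul_nonneg (mul_nonneg hNpos.le (sq_nonneg (ε₁ n))) (hM0 n).le]
    · simp only [Set.indicator_of_notMem hzS, Set.indicator_of_notMem hzE, mul_zero, sub_zero]
      have : (N:ℝ) * (0:ℝ)^2 * w z = 0 := by ring
      rw [this]
      exact add_nonneg
        (le_refl (0:ℝ))
        (mul_nonneg (mul_nonneg (mul_nonneg hNpos.le (sq_nonneg _)) (hM0 n).le) hA0)
  -- the global pointwise bound
  have hFG : ∀ z ∈ Omega,
      (surf f lam D z - surf f lam D2 z)^2 * w z ≤
      ∑ n, ((N:ℝ) * ε₁ n^2 * M n * Set.indicator (sqE lam (D n)) 1 z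
        + (N:ℝ) * (|f (D n)| + 1)^2 * M n *
          Set.indicator (sqr (lam (D n) + u n) (D n) \ sqr (lam (D n) - u n) (D n)) 1 z) := by
    intro z hz
    have hsum : surf f lam D z - surf f lam D2 z
        = ∑ n, (f (D n) * Set.indicator (sqE lam (D n)) 1 z
            - f (D2 n) * Set.indicator (sqE lam (D2 n)) 1 z) := by
      rw [surf, surf, ← Finset.sum_sub_distrib]
    rw [hsum]
    have hCS : (∑ n, (f (D n) * Set.indicator (sqE lam (D n)) 1 z
        - f (D2 n) * Set.indicator (sqE lam (D2 n)) 1 z))^2 ≤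
        (N:ℝ) * ∑ n, (f (D n) * Set.indicator (sqE lam (D n)) 1 z
          - f (D2 n) * Set.indicator (sqE lam (D2 n)) 1 z)^2 := by
      have := sq_sum_le_card_mul_sum_sq (s := (Finset.univ : Finset (Fin N)))
        (f := fun n => f (D n) * Set.indicator (sqE lam (D n)) 1 z
          - f (D2 n) * Set.indicator (sqE lam (D2 n)) 1 z)
      simpa using this
    calc (∑ n, (f (D n) * Set.indicator (sqE lam (D n)) 1 z
          - f (D2 n) * Set.indicator (sqE lam (D2 n)) 1 z))^2 * w z
        ≤ ((N:ℝ) * ∑ n, (f (D n) * Set.indicator (sqE lam (D n)) 1 z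
          - f (D2 n) * Set.indicator (sqE lam (D2 n)) 1 z)^2) * w z :=
          mul_le_mul_of_nonneg_right hCS (hw0 z hz).le
      _ = ∑ n, (N:ℝ) * (f (D n) * Set.indicator (sqE lam (D n)) 1 z
          - f (D2 n) * Set.indicator (sqE lam (D2 n)) 1 z)^2 * w z := by
          rw [Finset.mul_sum, Finset.sum_mul]
      _ ≤ _ := Finset.sum_le_sum fun n _ => hpoint n z hz
  -- integrability and volume facts
  have hfinS : ∀ n, volume (sqE lam (D n)) ≠ ⊤ := by
    intro n
    have : sqE lam (D n) = sqr (lam (D n)) (D n) := rfl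
    rw [this, volume_sqr']
    exact ENNReal.mul_ne_top ENNReal.ofReal_ne_top ENNReal.ofReal_ne_top
  have hmeasS : ∀ n, MeasurableSet (sqE lam (D n)) := fun n => measurableSet_sqr'
  have hmeasA : ∀ n, MeasurableSet
      (sqr (lam (D n) + u n) (D n) \ sqr (lam (D n) - u n) (D n)) := fun n =>
    measurableSet_sqr'.diff measurableSet_sqr'
  have hfinA : ∀ n, volume (sqr (lam (D n) + u n) (D n) \ sqr (lam (D n) - u n) (D n)) ≠ ⊤ := by
    intro n
    refine ne_top_of_le_ne_top ?_ (measure_mono Set.diff_subset)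
    rw [volume_sqr']
    exact ENNReal.mul_ne_top ENNReal.ofReal_ne_top ENNReal.ofReal_ne_top
  have hvolS : ∀ n, (volume (sqE lam (D n))).toReal = lam (D n) * lam (D n) := by
    intro n
    have : sqE lam (D n) = sqr (lam (D n)) (D n) := rfl
    rw [this, volume_sqr', ENNReal.toReal_mul, ENNReal.toReal_ofReal (hl n).le]
  have hvolA : ∀ n, (volume (sqr (lam (D n) + u n) (D n) \ sqr (lam (D n) - u n) (D n))).toReal
      = 4 * lam (D n) * u n := by
    intro n
    rw [measure_diff (sqr_mono' (by linarith [hu0 n]) (D n))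
      measurableSet_sqr'.nullMeasurableSet
      (by rw [volume_sqr']; exact ENNReal.mul_ne_top ENNReal.ofReal_ne_top ENNReal.ofReal_ne_top),
      ENNReal.toReal_sub_of_le (measure_mono (sqr_mono' (by linarith [hu0 n]) (D n)))
      (by rw [volume_sqr']; exact ENNReal.mul_ne_top ENNReal.ofReal_ne_top ENNReal.ofReal_ne_top),
      volume_sqr', volume_sqr', ENNReal.toReal_mul, ENNReal.toReal_mul,
      ENNReal.toReal_ofReal (by linarith [hu0 n, hl n] : (0:ℝ) ≤ lam (D n) + u n),
      ENNReal.toReal_ofReal (by linarith [hul n] : (0:ℝ) ≤ lam (D n) - u n)]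
    ring
  have hintS : ∀ n, Integrable
      (fun z => (N:ℝ) * ε₁ n^2 * M n * Set.indicator (sqE lam (D n)) 1 z)
      (volume.restrict Omega) := fun n => integrable_cmi' (hmeasS n) (hfinS n) _ _
  have hintA : ∀ n, Integrable
      (fun z => (N:ℝ) * (|f (D n)| + 1)^2 * M n * Set.indicator
        (sqr (lam (D n) + u n) (D n) \ sqr (lam (D n) - u n) (D n)) 1 z)
      (volume.restrict Omega) := fun n => integrable_cmi' (hmeasA n) (hfinA n) _ _
  have hGint : Integrable (fun z => ∑ n,
      ((N:ℝ) * ε₁ n^2 * M n * Set.indicator (sqE lam (D n)) 1 z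
        + (N:ℝ) * (|f (D n)| + 1)^2 * M n *
          Set.indicator (sqr (lam (D n) + u n) (D n) \ sqr (lam (D n) - u n) (D n)) 1 z))
      (volume.restrict Omega) :=
    integrable_finset_sum _ (fun n _ => (hintS n).add (hintA n))
  -- value of the dominating integral
  have hGval : ∫ z in Omega, (∑ n,
      ((N:ℝ) * ε₁ n^2 * M n * Set.indicator (sqE lam (D n)) 1 z
        + (N:ℝ) * (|f (D n)| + 1)^2 * M n *
          Set.indicator (sqr (lam (D n) + u n) (D n) \ sqr (lam (D n) - u n) (D n)) 1 z))
      ≤ ε^2 / 2 := by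
    have hsplit : (∫ z in Omega, ∑ n,
        ((N:ℝ) * ε₁ n^2 * M n * Set.indicator (sqE lam (D n)) 1 z
          + (N:ℝ) * (|f (D n)| + 1)^2 * M n *
            Set.indicator (sqr (lam (D n) + u n) (D n) \ sqr (lam (D n) - u n) (D n)) 1 z))
        = ∑ n, ∫ z in Omega,
        ((N:ℝ) * ε₁ n^2 * M n * Set.indicator (sqE lam (D n)) 1 z
          + (N:ℝ) * (|f (D n)| + 1)^2 * M n *
            Set.indicator (sqr (lam (D n) + u n) (D n) \ sqr (lam (D n) - u n) (D n)) 1 z) :=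
      integral_finset_sum Finset.univ (fun n _ => (hintS n).add (hintA n))
    rw [hsplit]
    have hterm : ∀ n, (∫ z in Omega,
        ((N:ℝ) * ε₁ n^2 * M n * Set.indicator (sqE lam (D n)) 1 z
          + (N:ℝ) * (|f (D n)| + 1)^2 * M n *
            Set.indicator (sqr (lam (D n) + u n) (D n) \ sqr (lam (D n) - u n) (D n)) 1 z))
        ≤ ε^2 / (4*(N:ℝ)) + ε^2 / (4*(N:ℝ)) := by
      intro n
      rw [integral_add (hintS n) (hintA n)]
      have h1 : (∫ z in Omega, (N:ℝ) * ε₁ n^2 * M n * Set.indicator (sqE lam (D n)) 1 z)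
          ≤ ε^2 / (4*(N:ℝ)) := by
        calc (∫ z in Omega, (N:ℝ) * ε₁ n^2 * M n * Set.indicator (sqE lam (D n)) 1 z)
            ≤ (N:ℝ) * ε₁ n^2 * M n * (volume (sqE lam (D n))).toReal :=
              integral_cmi_le' (hmeasS n) (hfinS n)
                (mul_nonneg (mul_nonneg hNpos.le (sq_nonneg _)) (hM0 n).le) _
          _ = (N:ℝ) * ε₁ n^2 * M n * (lam (D n))^2 := by rw [hvolS n]; ring
          _ ≤ ε^2 / (4*(N:ℝ)) := hbound1 n
      have h2 : (∫ z in Omega, (N:ℝ) * (|f (D n)| + 1)^2 * M n * Set.indicator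
            (sqr (lam (D n) + u n) (D n) \ sqr (lam (D n) - u n) (D n)) 1 z)
          ≤ ε^2 / (4*(N:ℝ)) := by
        calc (∫ z in Omega, (N:ℝ) * (|f (D n)| + 1)^2 * M n * Set.indicator
              (sqr (lam (D n) + u n) (D n) \ sqr (lam (D n) - u n) (D n)) 1 z)
            ≤ (N:ℝ) * (|f (D n)| + 1)^2 * M n *
              (volume (sqr (lam (D n) + u n) (D n) \ sqr (lam (D n) - u n) (D n))).toReal :=
              integral_cmi_le' (hmeasA n) (hfinA n)
                (mul_nonneg (mul_nonneg hNpos.le (sq_nonneg _)) (hM0 n).le) _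
          _ = (N:ℝ) * (|f (D n)| + 1)^2 * M n * (4 * lam (D n) * u n) := by rw [hvolA n]
          _ ≤ ε^2 / (4*(N:ℝ)) := hbound2 n
      linarith
    calc (∑ n, ∫ z in Omega,
        ((N:ℝ) * ε₁ n^2 * M n * Set.indicator (sqE lam (D n)) 1 z
          + (N:ℝ) * (|f (D n)| + 1)^2 * M n *
            Set.indicator (sqr (lam (D n) + u n) (D n) \ sqr (lam (D n) - u n) (D n)) 1 z))
        ≤ ∑ _n : Fin N, (ε^2 / (4*(N:ℝ)) + ε^2 / (4*(N:ℝ))) :=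
          Finset.sum_le_sum fun n _ => hterm n
      _ = (N:ℝ) * (ε^2 / (4*(N:ℝ)) + ε^2 / (4*(N:ℝ))) := by
          rw [Finset.sum_const, Finset.card_univ, Fintype.card_fin, nsmul_eq_mul]
      _ = ε^2 / 2 := by field_simp; ring
  -- main integral bound
  have hF0 : 0 ≤ᵐ[volume.restrict Omega]
      (fun z => (surf f lam D z - surf f lam D2 z)^2 * w z) :=
    ae_restrict_of_forall_mem hΩm (fun z hz => mul_nonneg (sq_nonneg _) (hw0 z hz).le)
  have hFGae : (fun z => (surf f lam D z - surf f lam D2 z)^2 * w z) ≤ᵐ[volume.restrict Omega]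
      (fun z => ∑ n, ((N:ℝ) * ε₁ n^2 * M n * Set.indicator (sqE lam (D n)) 1 z
        + (N:ℝ) * (|f (D n)| + 1)^2 * M n *
          Set.indicator (sqr (lam (D n) + u n) (D n) \ sqr (lam (D n) - u n) (D n)) 1 z)) :=
    ae_restrict_of_forall_mem hΩm hFG
  have hint : ∫ z in Omega, (surf f lam D z - surf f lam D2 z)^2 * w z ≤ ε^2 / 2 :=
    le_trans (integral_mono_of_nonneg hF0 hGint hFGae) hGval
  -- rewrite the goal
  have hsurfeq : ∀ z, surf f lam D' z = surf f lam D2 z := by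
    intro z
    rw [surf, surf]
    exact (Equiv.sum_comp σ (fun m => f (D' m) * Set.indicator (sqE lam (D' m)) 1 z)).symm
  have hfun : (fun z => surf f lam D z - surf f lam D' z)
      = (fun z => surf f lam D z - surf f lam D2 z) := funext fun z => by rw [hsurfeq z]
  rw [hfun]
  show Real.sqrt (∫ z in Omega, (surf f lam D z - surf f lam D2 z)^2 * w z) < ε
  rw [Real.sqrt_lt' hε]
  have hε2 : 0 < ε^2 := pow_pos hε 2
  linarith [hint]
end
end

section
/- Let λ : Ω → (0,∞) and w : Ω → (0,∞) be continuous, with E(x,y) ⊆ Ω for all (x,y) ∈ Ω, and let f : Ω → ℝ be an arbitrary function. Suppose the persistence-surface map is continuous on one-point diagrams, i.e. for every (x,y) ∈ Ω and every ε > 0 there exists δ > 0 such that ‖(x',y') − (x,y)‖_∞ < δ implies ‖f(x,y)·χ_{E(x,y)} − f(x',y')·χ_{E(x',y')}‖_{L²(w dA)} < ε. Then f is continuous on Ω. -/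
open MeasureTheory Real

noncomputable section

lemma measurableSet_Omega : MeasurableSet Omega := by
  have : IsOpen Omega := by
    have h : Omega = (Set.Ioi (0:ℝ)) ×ˢ (Set.Ioi (0:ℝ)) := by
      ext p; simp [Omega, Set.mem_prod]
    rw [h]; exact isOpen_Ioi.prod isOpen_Ioi
  exact this.measurableSet

lemma measurableSet_sqE (lam : ℝ × ℝ → ℝ) (p : ℝ × ℝ) : MeasurableSet (sqE lam p) :=
  (measurableSet_Icc).prod measurableSet_Icc

lemma isCompact_sqE (lam : ℝ × ℝ → ℝ) (p : ℝ × ℝ) : IsCompact (sqE lam p) :=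
  (isCompact_Icc).prod isCompact_Icc

lemma mem_sqE {lam : ℝ × ℝ → ℝ} {p z : ℝ × ℝ}
    (h1 : |z.1 - p.1| ≤ lam p / 2) (h2 : |z.2 - p.2| ≤ lam p / 2) : z ∈ sqE lam p := by
  rw [abs_le] at h1 h2
  exact ⟨⟨by linarith [h1.1], by linarith [h1.2]⟩, ⟨by linarith [h2.1], by linarith [h2.2]⟩⟩

lemma indicator_bdd (s : Set (ℝ × ℝ)) (z : ℝ × ℝ) :
    Set.indicator s (1 : ℝ × ℝ → ℝ) z ≤ 1 ∧ 0 ≤ Set.indicator s (1 : ℝ × ℝ → ℝ) z := by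
  by_cases h : z ∈ s <;> simp [Set.indicator_apply, h]


/-- if the persistence-surface map is continuous on one-point diagrams,
then `f` is continuous on `Omega`. -/
theorem stmt5 (f lam w : ℝ × ℝ → ℝ)
    (hlamc : ContinuousOn lam Omega) (hwc : ContinuousOn w Omega)
    (hlam0 : ∀ q ∈ Omega, 0 < lam q) (hw0 : ∀ q ∈ Omega, 0 < w q)
    (hE : ∀ q ∈ Omega, sqE lam q ⊆ Omega)
    (hcont : ∀ q ∈ Omega, ∀ ε > 0, ∃ δ > 0, ∀ q' ∈ Omega, ‖q' - q‖ < δ →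
      l2norm w (fun z => f q * Set.indicator (sqE lam q) 1 z
        - f q' * Set.indicator (sqE lam q') 1 z) < ε) :
    ContinuousOn f Omega := by
  intro q hq
  rw [Metric.continuousWithinAt_iff]
  intro ε hε
  have hLpos : 0 < lam q := hlam0 q hq
  set L := lam q with hLdef
  obtain ⟨δ₁, hδ₁pos, hδ₁⟩ := Metric.continuousWithinAt_iff.mp (hlamc q hq) (L/2) (by positivity)
  have hlam_lb : ∀ q' ∈ Omega, dist q' q < δ₁ → L/2 < lam q' := by
    intro q' hq' hd
    have h := hδ₁ hq' hd
    rw [Real.dist_eq, abs_lt] at h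
    linarith [h.1]
  have hwq : 0 < w q := hw0 q hq
  obtain ⟨δ₂, hδ₂pos, hδ₂⟩ := Metric.continuousWithinAt_iff.mp (hwc q hq) (w q / 2) (by positivity)
  set r := min (L/16) (δ₂/2) with hrdef
  have hrpos : 0 < r := lt_min (by positivity) (by positivity)
  have hr16 : r ≤ L/16 := min_le_left _ _
  set B := Metric.closedBall q r with hBdef
  have hBcomp : ∀ z ∈ B, |z.1 - q.1| ≤ r ∧ |z.2 - q.2| ≤ r := by
    intro z hz
    rw [hBdef, Metric.mem_closedBall, Prod.dist_eq] at hz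
    constructor
    · rw [← Real.dist_eq]; exact le_trans (le_max_left _ _) hz
    · rw [← Real.dist_eq]; exact le_trans (le_max_right _ _) hz
  have hBq : B ⊆ sqE lam q := by
    intro z hz
    obtain ⟨h1, h2⟩ := hBcomp z hz
    exact mem_sqE (by rw [← hLdef]; linarith) (by rw [← hLdef]; linarith)
  have hBΩ : B ⊆ Omega := hBq.trans (hE q hq)
  have hwB : ∀ z ∈ B, w q / 2 ≤ w z := by
    intro z hz
    have hzΩ : z ∈ Omega := hBΩ hz
    have hd : dist z q < δ₂ := by
      have : dist z q ≤ r := hz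
      have : r ≤ δ₂ / 2 := min_le_right _ _
      linarith [Metric.mem_closedBall.mp hz]
    have h := hδ₂ hzΩ hd
    rw [Real.dist_eq, abs_lt] at h
    linarith [h.1]
  have hBmeas : MeasurableSet B := measurableSet_closedBall
  have hIB : IntegrableOn w B := (hwc.mono hBΩ).integrableOn_compact (isCompact_closedBall q r)
  set c := ∫ z in B, w z with hcdef
  have hvolB : 0 < (volume B).toReal := by
    refine ENNReal.toReal_pos (Metric.measure_closedBall_pos volume q hrpos).ne' ?_
    exact measure_closedBall_lt_top.ne
  have hc : 0 < c := by
    have hconst : ∫ _ in B, (w q / 2) = (volume B).toReal * (w q / 2) := by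
      rw [setIntegral_const]; simp [smul_eq_mul, measureReal_def]
    have hle : ∫ _ in B, (w q / 2) ≤ c := by
      refine setIntegral_mono_on ?_ hIB hBmeas hwB
      exact (integrableOn_const_iff).mpr (Or.inr measure_closedBall_lt_top)
    rw [hconst] at hle
    have : 0 < (volume B).toReal * (w q / 2) := by positivity
    linarith
  have hsc : 0 < Real.sqrt c := Real.sqrt_pos.mpr hc
  obtain ⟨δ₃, hδ₃pos, hδ₃⟩ := hcont q hq (ε * Real.sqrt c) (by positivity)
  refine ⟨min δ₃ (min δ₁ (L/8)), by positivity, ?_⟩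
  intro q' hq' hdist
  have hd3 : dist q' q < δ₃ := lt_of_lt_of_le hdist (min_le_left _ _)
  have hd1 : dist q' q < δ₁ := lt_of_lt_of_le hdist ((min_le_right _ _).trans (min_le_left _ _))
  have hd8 : dist q' q < L/8 := lt_of_lt_of_le hdist ((min_le_right _ _).trans (min_le_right _ _))
  have hlamq' : L/2 < lam q' := hlam_lb q' hq' hd1
  have hBq' : B ⊆ sqE lam q' := by
    intro z hz
    obtain ⟨h1, h2⟩ := hBcomp z hz
    have hq1 : |q'.1 - q.1| < L/8 := by
      rw [← Real.dist_eq]; exact lt_of_le_of_lt (le_trans (le_max_left _ _) (le_of_eq (Prod.dist_eq).symm)) hd8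
    have hq2 : |q'.2 - q.2| < L/8 := by
      rw [← Real.dist_eq]; exact lt_of_le_of_lt (le_trans (le_max_right _ _) (le_of_eq (Prod.dist_eq).symm)) hd8
    refine mem_sqE ?_ ?_
    · have : |z.1 - q'.1| ≤ |z.1 - q.1| + |q'.1 - q.1| := by
        have := abs_sub_le z.1 q.1 q'.1
        rw [abs_sub_comm q.1 q'.1] at this
        linarith [this]
      linarith
    · have : |z.2 - q'.2| ≤ |z.2 - q.2| + |q'.2 - q.2| := by
        have := abs_sub_le z.2 q.2 q'.2
        rw [abs_sub_comm q.2 q'.2] at this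
        linarith [this]
      linarith
  set g := fun z => f q * Set.indicator (sqE lam q) 1 z
      - f q' * Set.indicator (sqE lam q') 1 z with hgdef
  set F := fun z => g z ^ 2 * w z with hFdef
  set K := sqE lam q ∪ sqE lam q' with hKdef
  have hKmeas : MeasurableSet K := (measurableSet_sqE lam q).union (measurableSet_sqE lam q')
  have hKcomp : IsCompact K := (isCompact_sqE lam q).union (isCompact_sqE lam q')
  have hKΩ : K ⊆ Omega := Set.union_subset (hE q hq) (hE q' hq')
  have hgmeas : Measurable g := by
    apply Measurable.sub
    · exact measurable_const.mul (measurable_const.indicator (measurableSet_sqE lam q))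
    · exact measurable_const.mul (measurable_const.indicator (measurableSet_sqE lam q'))
  have hFK : IntegrableOn F K := by
    have hwK : IntegrableOn w K := (hwc.mono hKΩ).integrableOn_compact hKcomp
    refine Integrable.mono' (hwK.const_mul ((|f q| + |f q'|)^2)) ?_ ?_
    · exact ((hgmeas.pow_const 2).aestronglyMeasurable.mul
        ((hwc.mono hKΩ).aestronglyMeasurable hKmeas))
    · refine ae_restrict_of_forall_mem hKmeas ?_
      intro z hz
      have hwz : 0 ≤ w z := (hw0 z (hKΩ hz)).le
      have hg : |g z| ≤ |f q| + |f q'| := by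
        rw [hgdef]
        obtain ⟨hi1, hi1'⟩ := indicator_bdd (sqE lam q) z
        obtain ⟨hi2, hi2'⟩ := indicator_bdd (sqE lam q') z
        have h1 : |f q * Set.indicator (sqE lam q) 1 z| ≤ |f q| := by
          rw [abs_mul]
          calc |f q| * |Set.indicator (sqE lam q) 1 z| ≤ |f q| * 1 := by
                apply mul_le_mul_of_nonneg_left _ (abs_nonneg _)
                rw [abs_of_nonneg hi1']; exact hi1
            _ = |f q| := mul_one _
        have h2 : |f q' * Set.indicator (sqE lam q') 1 z| ≤ |f q'| := by
          rw [abs_mul]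
          calc |f q'| * |Set.indicator (sqE lam q') 1 z| ≤ |f q'| * 1 := by
                apply mul_le_mul_of_nonneg_left _ (abs_nonneg _)
                rw [abs_of_nonneg hi2']; exact hi2
            _ = |f q'| := mul_one _
        calc |f q * Set.indicator (sqE lam q) 1 z - f q' * Set.indicator (sqE lam q') 1 z|
            ≤ |f q * Set.indicator (sqE lam q) 1 z| + |f q' * Set.indicator (sqE lam q') 1 z| :=
              abs_sub _ _
          _ ≤ |f q| + |f q'| := add_le_add h1 h2
      have hg2 : g z ^ 2 ≤ (|f q| + |f q'|)^2 := by
        rw [← sq_abs]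
        exact pow_le_pow_left₀ (abs_nonneg _) hg 2
      rw [hFdef]
      simp only [Real.norm_eq_abs]
      rw [abs_of_nonneg (mul_nonneg (sq_nonneg _) hwz)]
      exact mul_le_mul_of_nonneg_right hg2 hwz
  have hFzero : ∀ z ∉ K, F z = 0 := by
    intro z hz
    rw [hKdef, Set.mem_union] at hz
    push_neg at hz
    simp [hFdef, hgdef, Set.indicator_of_notMem hz.1, Set.indicator_of_notMem hz.2]
  have hFΩ : IntegrableOn F Omega := by
    have heq : F = K.indicator F := by
      funext z
      by_cases h : z ∈ K
      · rw [Set.indicator_of_mem h]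
      · rw [Set.indicator_of_notMem h, hFzero z h]
    rw [IntegrableOn, heq, integrable_indicator_iff hKmeas, IntegrableOn,
      Measure.restrict_restrict hKmeas, Set.inter_eq_left.mpr hKΩ]
    exact hFK
  have hBeq : ∫ z in B, F z = (f q - f q')^2 * c := by
    rw [hcdef, ← integral_const_mul]
    apply setIntegral_congr_fun hBmeas
    intro z hz
    have h1 : Set.indicator (sqE lam q) (1 : ℝ × ℝ → ℝ) z = 1 := Set.indicator_of_mem (hBq hz) 1
    have h2 : Set.indicator (sqE lam q') (1 : ℝ × ℝ → ℝ) z = 1 := Set.indicator_of_mem (hBq' hz) 1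
    simp only [hFdef, hgdef, h1, h2, mul_one]
  have hmono : ∫ z in B, F z ≤ ∫ z in Omega, F z := by
    refine setIntegral_mono_set hFΩ ?_ (HasSubset.Subset.eventuallyLE hBΩ)
    refine ae_restrict_of_forall_mem measurableSet_Omega ?_
    intro z hz
    exact mul_nonneg (sq_nonneg _) (hw0 z hz).le
  have hl2 : |f q - f q'| * Real.sqrt c ≤ l2norm w g := by
    rw [l2norm]
    have hkey : (f q - f q')^2 * c ≤ ∫ z in Omega, g z ^ 2 * w z := by
      rw [← hBeq]; exact hmono
    calc |f q - f q'| * Real.sqrt c = Real.sqrt ((f q - f q')^2 * c) := by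
          rw [Real.sqrt_mul (sq_nonneg _), Real.sqrt_sq_eq_abs]
      _ ≤ _ := Real.sqrt_le_sqrt hkey
  have hlt : l2norm w g < ε * Real.sqrt c := by
    have := hδ₃ q' hq' (by rwa [dist_eq_norm] at hd3)
    exact this
  have hΔ : |f q - f q'| < ε := by
    have h := lt_of_le_of_lt hl2 hlt
    exact lt_of_mul_lt_mul_right (by linarith [h]) hsc.le
  rw [Real.dist_eq, abs_sub_comm]
  exact hΔ
end
end

section
/- Let λ : Ω → (0,∞) and w : Ω → (0,∞) with E(x,y) ⊆ Ω for all (x,y) ∈ Ω, and let M > 0 satisfy |λ(p) − λ(p')| ≤ M·‖p − p'‖_∞ for all p, p' ∈ Ω, λ ≤ M on Ω, and w ≤ M on Ω, with w measurable. Let p, p' ∈ Ω satisfy ‖p − p'‖_∞ < (λ(p) + λ(p'))/2. Then ∫_Ω |χ_{E(p)} − χ_{E(p')}|² w dA ≤ 2M²(M + 2)·‖p − p'‖_∞. -/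
open MeasureTheory Real

noncomputable section

private lemma pairB {u v s t M c : ℝ} (huv : u + v = 0) (hs : 0 ≤ s) (ht : 0 ≤ t)
    (hsM : s ≤ M) (htM : t ≤ M) (hu : u ≤ c) (hv : v ≤ c) :
    max u 0 * s + max v 0 * t ≤ c * M := by
  have hM0 : 0 ≤ M := le_trans hs hsM
  have hsum : max u 0 + max v 0 ≤ c := by
    rcases le_total u 0 with hle | hle
    · rw [max_eq_right hle, max_eq_left (by linarith : (0:ℝ) ≤ v)]; linarith
    · rw [max_eq_left hle, max_eq_right (by linarith : v ≤ 0)]; linarith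
  calc max u 0 * s + max v 0 * t
      ≤ max u 0 * M + max v 0 * M := by
        have h1 := mul_le_mul_of_nonneg_left hsM (le_max_right u 0)
        have h2 := mul_le_mul_of_nonneg_left htM (le_max_right v 0)
        linarith
    _ = (max u 0 + max v 0) * M := by ring
    _ ≤ c * M := mul_le_mul_of_nonneg_right hsum hM0

set_option maxHeartbeats 1000000 in
/-- weighted `L²` estimate on the difference of indicators of two
overlapping squares. -/
theorem stmt15 (lam w : ℝ × ℝ → ℝ) (M : ℝ) (hM : 0 < M)
    (hlam0 : ∀ q ∈ Omega, 0 < lam q) (hw0 : ∀ q ∈ Omega, 0 < w q)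
    (hE : ∀ q ∈ Omega, sqE lam q ⊆ Omega)
    (hlip : ∀ q ∈ Omega, ∀ q' ∈ Omega, |lam q - lam q'| ≤ M * ‖q - q'‖)
    (hlamb : ∀ q ∈ Omega, lam q ≤ M) (hwb : ∀ q ∈ Omega, w q ≤ M)
    (p p' : ℝ × ℝ) (hp : p ∈ Omega) (hp' : p' ∈ Omega)
    (h : ‖p - p'‖ < (lam p + lam p') / 2) :
    ∫ z in Omega, (Set.indicator (sqE lam p) 1 z - Set.indicator (sqE lam p') 1 z) ^ 2 * w z ≤
      2 * M ^ 2 * (M + 2) * ‖p - p'‖ := by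
  have hε0 : 0 ≤ ‖p - p'‖ := norm_nonneg _
  have hl := hlam0 p hp
  have hl' := hlam0 p' hp'
  have hlM := hlamb p hp
  have hl'M := hlamb p' hp'
  have hx : |p.1 - p'.1| ≤ ‖p - p'‖ := by
    simpa [Real.norm_eq_abs] using norm_fst_le (p - p')
  have hy : |p.2 - p'.2| ≤ ‖p - p'‖ := by
    simpa [Real.norm_eq_abs] using norm_snd_le (p - p')
  have hll' : |lam p - lam p'| ≤ M * ‖p - p'‖ := hlip p hp p' hp'
  have hx' := abs_le.mp hx
  have hy' := abs_le.mp hy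
  have hll'' := abs_le.mp hll'
  by_cases hint : IntegrableOn
      (fun z => (Set.indicator (sqE lam p) 1 z - Set.indicator (sqE lam p') 1 z) ^ 2 * w z)
      Omega volume
  swap
  · rw [integral_undef hint]
    nlinarith [hε0, hM]
  -- abbreviations for endpoints
  set a1 : ℝ := p.1 - lam p / 2 with ha1
  set b1 : ℝ := p.1 + lam p / 2 with hb1
  set a2 : ℝ := p.2 - lam p / 2 with ha2
  set b2 : ℝ := p.2 + lam p / 2 with hb2
  set c1 : ℝ := p'.1 - lam p' / 2 with hc1
  set d1 : ℝ := p'.1 + lam p' / 2 with hd1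
  set c2 : ℝ := p'.2 - lam p' / 2 with hc2
  set d2 : ℝ := p'.2 + lam p' / 2 with hd2
  set T1 : Set (ℝ × ℝ) := Set.Icc a1 c1 ×ˢ Set.Icc a2 b2 with hT1
  set T2 : Set (ℝ × ℝ) := Set.Icc d1 b1 ×ˢ Set.Icc a2 b2 with hT2
  set T3 : Set (ℝ × ℝ) := Set.Icc a1 b1 ×ˢ Set.Icc a2 c2 with hT3
  set T4 : Set (ℝ × ℝ) := Set.Icc a1 b1 ×ˢ Set.Icc d2 b2 with hT4
  set T5 : Set (ℝ × ℝ) := Set.Icc c1 a1 ×ˢ Set.Icc c2 d2 with hT5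
  set T6 : Set (ℝ × ℝ) := Set.Icc b1 d1 ×ˢ Set.Icc c2 d2 with hT6
  set T7 : Set (ℝ × ℝ) := Set.Icc c1 d1 ×ˢ Set.Icc c2 a2 with hT7
  set T8 : Set (ℝ × ℝ) := Set.Icc c1 d1 ×ˢ Set.Icc b2 d2 with hT8
  have hInd : ∀ T : Set (ℝ × ℝ), MeasurableSet T → volume T < ⊤ →
      Integrable (T.indicator fun _ => M) volume := by
    intro T hT hTfin
    rw [integrable_indicator_iff hT]
    exact integrableOn_const hTfin.ne
  have hmeas : ∀ (u₁ u₂ v₁ v₂ : ℝ), MeasurableSet (Set.Icc u₁ u₂ ×ˢ Set.Icc v₁ v₂) :=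
    fun _ _ _ _ => measurableSet_Icc.prod measurableSet_Icc
  have hfin : ∀ (u₁ u₂ v₁ v₂ : ℝ), volume (Set.Icc u₁ u₂ ×ˢ Set.Icc v₁ v₂) < ⊤ :=
    fun _ _ _ _ => (isCompact_Icc.prod isCompact_Icc).measure_lt_top
  have hg1 := hInd T1 (hmeas _ _ _ _) (hfin _ _ _ _)
  have hg2 := hInd T2 (hmeas _ _ _ _) (hfin _ _ _ _)
  have hg3 := hInd T3 (hmeas _ _ _ _) (hfin _ _ _ _)
  have hg4 := hInd T4 (hmeas _ _ _ _) (hfin _ _ _ _)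
  have hg5 := hInd T5 (hmeas _ _ _ _) (hfin _ _ _ _)
  have hg6 := hInd T6 (hmeas _ _ _ _) (hfin _ _ _ _)
  have hg7 := hInd T7 (hmeas _ _ _ _) (hfin _ _ _ _)
  have hg8 := hInd T8 (hmeas _ _ _ _) (hfin _ _ _ _)
  have hg12 := hg1.add hg2
  have hg13 := hg12.add hg3
  have hg14 := hg13.add hg4
  have hg15 := hg14.add hg5
  have hg16 := hg15.add hg6
  have hg17 := hg16.add hg7
  have ag2 : Integrable (fun z => T1.indicator (fun _ => M) z + T2.indicator (fun _ => M) z)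
      volume := hg12
  have ag3 : Integrable (fun z => T1.indicator (fun _ => M) z + T2.indicator (fun _ => M) z +
      T3.indicator (fun _ => M) z) volume := hg13
  have ag4 : Integrable (fun z => T1.indicator (fun _ => M) z + T2.indicator (fun _ => M) z +
      T3.indicator (fun _ => M) z + T4.indicator (fun _ => M) z) volume := hg14
  have ag5 : Integrable (fun z => T1.indicator (fun _ => M) z + T2.indicator (fun _ => M) z +
      T3.indicator (fun _ => M) z + T4.indicator (fun _ => M) z + T5.indicator (fun _ => M) z)
      volume := hg15
  have ag6 : Integrable (fun z => T1.indicator (fun _ => M) z + T2.indicator (fun _ => M) z +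
      T3.indicator (fun _ => M) z + T4.indicator (fun _ => M) z + T5.indicator (fun _ => M) z +
      T6.indicator (fun _ => M) z) volume := hg16
  have ag7 : Integrable (fun z => T1.indicator (fun _ => M) z + T2.indicator (fun _ => M) z +
      T3.indicator (fun _ => M) z + T4.indicator (fun _ => M) z + T5.indicator (fun _ => M) z +
      T6.indicator (fun _ => M) z + T7.indicator (fun _ => M) z) volume := hg17
  have hg : Integrable (fun z => T1.indicator (fun _ => M) z + T2.indicator (fun _ => M) z +
      T3.indicator (fun _ => M) z + T4.indicator (fun _ => M) z + T5.indicator (fun _ => M) z +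
      T6.indicator (fun _ => M) z + T7.indicator (fun _ => M) z + T8.indicator (fun _ => M) z)
      volume := hg17.add hg8
  have hgnn : ∀ (T : Set (ℝ × ℝ)) (y : ℝ × ℝ), 0 ≤ T.indicator (fun _ => M) y :=
    fun T y => Set.indicator_nonneg (fun _ _ => hM.le) y
  have hΩmeas : MeasurableSet Omega :=
    (measurableSet_Ioi.prod measurableSet_Ioi : MeasurableSet (Set.Ioi (0:ℝ) ×ˢ Set.Ioi (0:ℝ)))
  -- pointwise bound
  have key : ∀ z ∈ Omega,
      (Set.indicator (sqE lam p) 1 z - Set.indicator (sqE lam p') 1 z) ^ 2 * w z ≤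
      T1.indicator (fun _ => M) z + T2.indicator (fun _ => M) z + T3.indicator (fun _ => M) z +
      T4.indicator (fun _ => M) z + T5.indicator (fun _ => M) z + T6.indicator (fun _ => M) z +
      T7.indicator (fun _ => M) z + T8.indicator (fun _ => M) z := by
    intro z hz
    have hwz : w z ≤ M := hwb z hz
    have hwz0 : 0 < w z := hw0 z hz
    have n1 := hgnn T1 z; have n2 := hgnn T2 z; have n3 := hgnn T3 z; have n4 := hgnn T4 z
    have n5 := hgnn T5 z; have n6 := hgnn T6 z; have n7 := hgnn T7 z; have n8 := hgnn T8 z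
    by_cases hA : z ∈ sqE lam p <;> by_cases hB : z ∈ sqE lam p'
    · rw [Set.indicator_of_mem hA, Set.indicator_of_mem hB, sub_self]
      rw [zero_pow two_ne_zero, zero_mul]
      linarith
    · -- z ∈ A, z ∉ B
      rw [Set.indicator_of_mem hA, Set.indicator_of_notMem hB, Pi.one_apply, sub_zero, one_pow,
        one_mul]
      have hA' : (a1 ≤ z.1 ∧ z.1 ≤ b1) ∧ (a2 ≤ z.2 ∧ z.2 ≤ b2) := by
        simpa only [sqE, sqr, Set.mem_prod, Set.mem_Icc] using hA
      rcases lt_or_ge z.1 c1 with h1 | h1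
      · have e1 : T1.indicator (fun _ => M) z = M :=
          Set.indicator_of_mem (Set.mem_prod.mpr ⟨Set.mem_Icc.mpr ⟨hA'.1.1, h1.le⟩,
            Set.mem_Icc.mpr hA'.2⟩) _
        linarith
      rcases lt_or_ge d1 z.1 with h2 | h2
      · have e1 : T2.indicator (fun _ => M) z = M :=
          Set.indicator_of_mem (Set.mem_prod.mpr ⟨Set.mem_Icc.mpr ⟨h2.le, hA'.1.2⟩,
            Set.mem_Icc.mpr hA'.2⟩) _
        linarith
      rcases lt_or_ge z.2 c2 with h3 | h3
      · have e1 : T3.indicator (fun _ => M) z = M :=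
          Set.indicator_of_mem (Set.mem_prod.mpr ⟨Set.mem_Icc.mpr hA'.1,
            Set.mem_Icc.mpr ⟨hA'.2.1, h3.le⟩⟩) _
        linarith
      rcases lt_or_ge d2 z.2 with h4 | h4
      · have e1 : T4.indicator (fun _ => M) z = M :=
          Set.indicator_of_mem (Set.mem_prod.mpr ⟨Set.mem_Icc.mpr hA'.1,
            Set.mem_Icc.mpr ⟨h4.le, hA'.2.2⟩⟩) _
        linarith
      · exact absurd (Set.mem_prod.mpr ⟨Set.mem_Icc.mpr ⟨h1, h2⟩, Set.mem_Icc.mpr ⟨h3, h4⟩⟩) hB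
    · -- z ∉ A, z ∈ B
      rw [Set.indicator_of_notMem hA, Set.indicator_of_mem hB, Pi.one_apply, zero_sub,
        neg_one_sq, one_mul]
      have hB' : (c1 ≤ z.1 ∧ z.1 ≤ d1) ∧ (c2 ≤ z.2 ∧ z.2 ≤ d2) := by
        simpa only [sqE, sqr, Set.mem_prod, Set.mem_Icc] using hB
      rcases lt_or_ge z.1 a1 with h1 | h1
      · have e1 : T5.indicator (fun _ => M) z = M :=
          Set.indicator_of_mem (Set.mem_prod.mpr ⟨Set.mem_Icc.mpr ⟨hB'.1.1, h1.le⟩,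
            Set.mem_Icc.mpr hB'.2⟩) _
        linarith
      rcases lt_or_ge b1 z.1 with h2 | h2
      · have e1 : T6.indicator (fun _ => M) z = M :=
          Set.indicator_of_mem (Set.mem_prod.mpr ⟨Set.mem_Icc.mpr ⟨h2.le, hB'.1.2⟩,
            Set.mem_Icc.mpr hB'.2⟩) _
        linarith
      rcases lt_or_ge z.2 a2 with h3 | h3
      · have e1 : T7.indicator (fun _ => M) z = M :=
          Set.indicator_of_mem (Set.mem_prod.mpr ⟨Set.mem_Icc.mpr hB'.1,
            Set.mem_Icc.mpr ⟨hB'.2.1, h3.le⟩⟩) _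
        linarith
      rcases lt_or_ge b2 z.2 with h4 | h4
      · have e1 : T8.indicator (fun _ => M) z = M :=
          Set.indicator_of_mem (Set.mem_prod.mpr ⟨Set.mem_Icc.mpr hB'.1,
            Set.mem_Icc.mpr ⟨h4.le, hB'.2.2⟩⟩) _
        linarith
      · exact absurd (Set.mem_prod.mpr ⟨Set.mem_Icc.mpr ⟨h1, h2⟩, Set.mem_Icc.mpr ⟨h3, h4⟩⟩) hA
    · rw [Set.indicator_of_notMem hA, Set.indicator_of_notMem hB, sub_self]
      rw [zero_pow two_ne_zero, zero_mul]
      linarith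
  -- volume computations
  have hvol : ∀ (u₁ u₂ v₁ v₂ : ℝ),
      (volume (Set.Icc u₁ u₂ ×ˢ Set.Icc v₁ v₂)).toReal = max (u₂ - u₁) 0 * max (v₂ - v₁) 0 := by
    intro u₁ u₂ v₁ v₂
    rw [Measure.volume_eq_prod, Measure.prod_prod, Real.volume_Icc, Real.volume_Icc,
      ENNReal.toReal_mul, ENNReal.toReal_ofReal', ENNReal.toReal_ofReal']
  calc ∫ z in Omega, (Set.indicator (sqE lam p) 1 z - Set.indicator (sqE lam p') 1 z) ^ 2 * w z
      ≤ ∫ z in Omega, (T1.indicator (fun _ => M) z + T2.indicator (fun _ => M) z +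
        T3.indicator (fun _ => M) z + T4.indicator (fun _ => M) z + T5.indicator (fun _ => M) z +
        T6.indicator (fun _ => M) z + T7.indicator (fun _ => M) z + T8.indicator (fun _ => M) z) :=
      setIntegral_mono_on hint hg.integrableOn hΩmeas key
    _ ≤ ∫ z, (T1.indicator (fun _ => M) z + T2.indicator (fun _ => M) z +
        T3.indicator (fun _ => M) z + T4.indicator (fun _ => M) z + T5.indicator (fun _ => M) z +
        T6.indicator (fun _ => M) z + T7.indicator (fun _ => M) z + T8.indicator (fun _ => M) z) :=
      setIntegral_le_integral hg (Filter.Eventually.of_forall fun z => by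
        have n1 := hgnn T1 z; have n2 := hgnn T2 z; have n3 := hgnn T3 z; have n4 := hgnn T4 z
        have n5 := hgnn T5 z; have n6 := hgnn T6 z; have n7 := hgnn T7 z; have n8 := hgnn T8 z
        simp only [Pi.zero_apply]; linarith)
    _ = (volume T1).toReal * M + (volume T2).toReal * M + (volume T3).toReal * M +
        (volume T4).toReal * M + (volume T5).toReal * M + (volume T6).toReal * M +
        (volume T7).toReal * M + (volume T8).toReal * M := by
      rw [integral_add ag7 hg8, integral_add ag6 hg7, integral_add ag5 hg6,
        integral_add ag4 hg5, integral_add ag3 hg4, integral_add ag2 hg3,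
        integral_add hg1 hg2,
        integral_indicator_const M (hmeas _ _ _ _), integral_indicator_const M (hmeas _ _ _ _),
        integral_indicator_const M (hmeas _ _ _ _), integral_indicator_const M (hmeas _ _ _ _),
        integral_indicator_const M (hmeas _ _ _ _), integral_indicator_const M (hmeas _ _ _ _),
        integral_indicator_const M (hmeas _ _ _ _), integral_indicator_const M (hmeas _ _ _ _)]
      simp only [smul_eq_mul]
      rfl
    _ ≤ 2 * M ^ 2 * (M + 2) * ‖p - p'‖ := by
      rw [hT1, hT2, hT3, hT4, hT5, hT6, hT7, hT8]
      rw [hvol, hvol, hvol, hvol, hvol, hvol, hvol, hvol]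
      have hlen1 : b1 - a1 = lam p := by rw [hb1, ha1]; ring
      have hlen2 : b2 - a2 = lam p := by rw [hb2, ha2]; ring
      have hlen3 : d1 - c1 = lam p' := by rw [hd1, hc1]; ring
      have hlen4 : d2 - c2 = lam p' := by rw [hd2, hc2]; ring
      rw [hlen1, hlen2, hlen3, hlen4, max_eq_left hl.le, max_eq_left hl'.le]
      -- pair bounds
      have hc0 : (0:ℝ) ≤ ‖p - p'‖ + M * ‖p - p'‖ / 2 := by nlinarith
      have P1 : max (c1 - a1) 0 * lam p + max (a1 - c1) 0 * lam p' ≤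
          (‖p - p'‖ + M * ‖p - p'‖ / 2) * M :=
        pairB (by ring) hl.le hl'.le hlM hl'M
          (by rw [hc1, ha1]; linarith) (by rw [hc1, ha1]; linarith)
      have P2 : max (b1 - d1) 0 * lam p + max (d1 - b1) 0 * lam p' ≤
          (‖p - p'‖ + M * ‖p - p'‖ / 2) * M :=
        pairB (by ring) hl.le hl'.le hlM hl'M
          (by rw [hb1, hd1]; linarith) (by rw [hb1, hd1]; linarith)
      have P3 : max (c2 - a2) 0 * lam p + max (a2 - c2) 0 * lam p' ≤
          (‖p - p'‖ + M * ‖p - p'‖ / 2) * M :=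
        pairB (by ring) hl.le hl'.le hlM hl'M
          (by rw [hc2, ha2]; linarith) (by rw [hc2, ha2]; linarith)
      have P4 : max (b2 - d2) 0 * lam p + max (d2 - b2) 0 * lam p' ≤
          (‖p - p'‖ + M * ‖p - p'‖ / 2) * M :=
        pairB (by ring) hl.le hl'.le hlM hl'M
          (by rw [hb2, hd2]; linarith) (by rw [hb2, hd2]; linarith)
      nlinarith [P1, P2, P3, P4, hM.le, hε0]
end
end
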